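/- Let H be a complex Hilbert space, A a bounded normal reductive operator on H, G a countable set of vectors in H, and L : G → ℕ ∪ {∞} a function satisfying the span condition: the closed linear span of { A^n g : g ∈ G, 0 ≤ n < L(g) } equals the closed linear span of { A^n g : g ∈ G, n ∈ ℕ }. If there exists h ∈ G with L(h) = ∞, then the family (A^n g), indexed by pairs (g,n) with g ∈ G and 0 ≤ n < L(g), is not minimal (in particular, it is not a basis for H). -/

import Mathlib

open ContinuousLinearMap
open scoped InnerProductSpace

/-- Let `A` be a bounded reductive normal operator on a complex Hilbert space `H`, `G` a
countable set of vectors, and `L : G → ℕ ∪ {∞}` satisfying the span condition. If some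
`h ∈ G` has `L h = ∞`, then the system `{A^n g : g ∈ G, 0 ≤ n < L g}` is not minimal. -/
theorem stmt_3 {H : Type*} [NormedAddCommGroup H] [InnerProductSpace ℂ H] [CompleteSpace H]
    (A : H →L[ℂ] H) (hA : adjoint A ∘L A = A ∘L adjoint A)
    (hred : ∀ V : Submodule ℂ H, IsClosed (V : Set H) →
      (∀ v ∈ V, A v ∈ V) → ∀ v ∈ V, adjoint A v ∈ V)
    (G : Set H) (hG : G.Countable) (L : ↥G → ℕ∞)
    (hspan :
      (Submodule.span ℂ
        {x | ∃ g : ↥G, ∃ n : ℕ, (n : ℕ∞) < L g ∧ x = (A ^ n) (g : H)}).topologicalClosure =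
      (Submodule.span ℂ
        {x | ∃ g : ↥G, ∃ n : ℕ, x = (A ^ n) (g : H)}).topologicalClosure)
    (hinf : ∃ h : ↥G, L h = ⊤) :
    ∃ q₀ : {p : ↥G × ℕ // (p.2 : ℕ∞) < L p.1},
      (A ^ q₀.1.2) (q₀.1.1 : H) ∈
        (Submodule.span ℂ
          ((fun q : {p : ↥G × ℕ // (p.2 : ℕ∞) < L p.1} => (A ^ q.1.2) (q.1.1 : H)) ''
            {q | q ≠ q₀})).topologicalClosure := by
  obtain ⟨h, hh⟩ := hinf
  set S1 : Set H := Set.range (fun n : ℕ => (A ^ (n + 1)) (h : H)) with hS1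
  set S2 : Set H := Set.range (fun n : ℕ => (A ^ (n + 2)) (h : H)) with hS2
  set V₁ : Submodule ℂ H := (Submodule.span ℂ S1).topologicalClosure with hV₁
  have hV₁closed : IsClosed (V₁ : Set H) := Submodule.isClosed_topologicalClosure _
  -- A maps span S1 into span S2 (and span S2 ≤ span S1)
  have hmap12 : ∀ x ∈ Submodule.span ℂ S1, A x ∈ Submodule.span ℂ S2 := by
    intro x hx
    have hle : (Submodule.span ℂ S1).map (A : H →ₗ[ℂ] H) ≤ Submodule.span ℂ S2 := by
      rw [Submodule.map_span, Submodule.span_le]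
      rintro _ ⟨_, ⟨n, rfl⟩, rfl⟩
      refine Submodule.subset_span ⟨n, ?_⟩
      simp [pow_succ', mul_apply]
    exact hle ⟨x, hx, rfl⟩
  have hS21 : Submodule.span ℂ S2 ≤ Submodule.span ℂ S1 := by
    rw [Submodule.span_le]
    rintro _ ⟨n, rfl⟩
    exact Submodule.subset_span ⟨n + 1, rfl⟩
  -- closure mapping
  have hclos : ∀ s t : Set H, (∀ x ∈ Submodule.span ℂ s, A x ∈ Submodule.span ℂ t) →
      ∀ x ∈ (Submodule.span ℂ s).topologicalClosure,
        A x ∈ (Submodule.span ℂ t).topologicalClosure := by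
    intro s t hst x hx
    exact map_mem_closure A.continuous hx hst
  have hinv : ∀ x ∈ V₁, A x ∈ V₁ := fun x hx =>
    hclos S1 S1 (fun y hy => hS21 (hmap12 y hy)) x hx
  have hadj : ∀ x ∈ V₁, adjoint A x ∈ V₁ := hred V₁ hV₁closed hinv
  haveI : CompleteSpace V₁ := hV₁closed.completeSpace_coe
  set v : H := (V₁.orthogonalProjectionOnto (h : H) : H) with hvdef
  have hv : v ∈ V₁ := (V₁.orthogonalProjectionOnto (h : H)).2
  have hu : (h : H) - v ∈ V₁ᗮ := Submodule.sub_starProjection_mem_orthogonal (K := V₁) (h : H)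
  have hAh1 : A (h : H) ∈ V₁ :=
    (Submodule.span ℂ S1).le_topologicalClosure (Submodule.subset_span ⟨0, by simp⟩)
  have hAu_perp : A ((h : H) - v) ∈ V₁ᗮ := by
    rw [Submodule.mem_orthogonal]
    intro y hy
    have : ⟪y, A ((h : H) - v)⟫_ℂ = ⟪adjoint A y, (h : H) - v⟫_ℂ := by
      rw [adjoint_inner_left]
    rw [this]
    exact (Submodule.mem_orthogonal V₁ _).mp hu _ (hadj y hy)
  have hAu_mem : A ((h : H) - v) ∈ V₁ := by
    rw [map_sub]
    exact V₁.sub_mem hAh1 (hinv v hv)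
  have hAu0 : A ((h : H) - v) = 0 := by
    have h0 : ⟪A ((h : H) - v), A ((h : H) - v)⟫_ℂ = 0 :=
      (Submodule.mem_orthogonal V₁ _).mp hAu_perp _ hAu_mem
    exact inner_self_eq_zero.mp h0
  have hAhv : A (h : H) = A v := by
    have := hAu0
    rw [map_sub, sub_eq_zero] at this
    exact this
  have hAv2 : A v ∈ (Submodule.span ℂ S2).topologicalClosure := hclos S1 S2 hmap12 v hv
  have h1lt : ((1 : ℕ) : ℕ∞) < L h := by rw [hh]; exact ENat.coe_lt_top 1
  refine ⟨⟨(h, 1), h1lt⟩, ?_⟩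
  have hsub : Submodule.span ℂ S2 ≤ Submodule.span ℂ
      ((fun q : {p : ↥G × ℕ // (p.2 : ℕ∞) < L p.1} => (A ^ q.1.2) (q.1.1 : H)) ''
        {q | q ≠ ⟨(h, 1), h1lt⟩}) := by
    rw [Submodule.span_le]
    rintro _ ⟨n, rfl⟩
    refine Submodule.subset_span ⟨⟨(h, n + 2), by rw [hh]; exact ENat.coe_lt_top _⟩, ?_, rfl⟩
    intro heq
    have := congrArg (fun q => q.1.2) heq
    simp at this
  have hfin : A (h : H) ∈ (Submodule.span ℂ
      ((fun q : {p : ↥G × ℕ // (p.2 : ℕ∞) < L p.1} => (A ^ q.1.2) (q.1.1 : H)) ''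
        {q | q ≠ ⟨(h, 1), h1lt⟩})).topologicalClosure := by
    rw [hAhv]
    exact Submodule.topologicalClosure_mono hsub hAv2
  simpa [pow_one] using hfin
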